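/- Conversely, if the cubic hypersurface Y ⊂ P^{n+1} defined by f(y_0,...,y_n) + l(y_0,...,y_n)·y_{n+1}^2 = 0 is smooth, then the hypersurface X = V(f) ⊂ P^n is smooth and the hyperplane H = V(l) intersects X transversely. -/

import Mathlib

open MvPolynomial

variable {σ : Type*} [DecidableEq σ]

lemma my_coeff_pderiv (p : MvPolynomial σ ℂ) (j : σ) (m : σ →₀ ℕ) :
    coeff m (pderiv j p) = ((m j : ℕ) + 1) * coeff (m + Finsupp.single j 1) p := by
  induction p using MvPolynomial.induction_on' with
  | add p q hp hq => simp [map_add, coeff_add, hp, hq, mul_add]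
  | monomial s a =>
    rw [pderiv_monomial, coeff_monomial, coeff_monomial]
    by_cases h : m + Finsupp.single j 1 = s
    · subst h
      rw [if_pos, if_pos rfl]
      · push_cast [Finsupp.add_apply, Finsupp.single_eq_same]
        ring
      · ext x
        by_cases hx : x = j <;>
          simp [Finsupp.sub_apply, Finsupp.add_apply, Finsupp.single_apply, hx]
    · rw [if_neg (Ne.symm h), mul_zero]
      by_cases h0 : s j = 0
      · by_cases h2 : s - Finsupp.single j 1 = m <;> simp [h2, h0]
      · rw [if_neg]
        intro h2
        apply h
        ext x
        by_cases hx : x = j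
        · subst hx
          have := Nat.succ_pred_eq_of_pos (Nat.pos_of_ne_zero h0)
          simp [← h2, Finsupp.add_apply, Finsupp.sub_apply, Finsupp.single_eq_same]
          omega
        · simp [← h2, Finsupp.add_apply, Finsupp.sub_apply, Finsupp.single_apply, Ne.symm hx]

lemma my_coeff_eq_zero {p : MvPolynomial σ ℂ} {j : σ} (h : pderiv j p = 0)
    {d : σ →₀ ℕ} (hd : d j ≠ 0) : coeff d p = 0 := by
  have key := my_coeff_pderiv p j (d - Finsupp.single j 1)
  have hdd : (d - Finsupp.single j 1) + Finsupp.single j 1 = d := by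
    ext x
    by_cases hx : x = j
    · subst hx
      simp [Finsupp.add_apply, Finsupp.sub_apply, Finsupp.single_eq_same]
      omega
    · simp [Finsupp.add_apply, Finsupp.sub_apply, Finsupp.single_apply, Ne.symm hx]
  rw [h, hdd, coeff_zero] at key
  have hne := Nat.cast_add_one_ne_zero (R := ℂ) ((d - Finsupp.single j 1 : σ →₀ ℕ) j)
  rcases mul_eq_zero.mp key.symm with h1 | h1
  · exact absurd h1 hne
  · exact h1

lemma my_eval_update {p : MvPolynomial σ ℂ} {j : σ} (h : pderiv j p = 0)
    (y : σ → ℂ) (t : ℂ) : eval (Function.update y j t) p = eval y p := by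
  rw [eval_eq, eval_eq]
  refine Finset.sum_congr rfl fun d hd => ?_
  congr 1
  refine Finset.prod_congr rfl fun i hi => ?_
  have : i ≠ j := by
    rintro rfl
    exact Finsupp.mem_support_iff.mp hi (by by_contra hc; exact absurd (my_coeff_eq_zero h hc) (Finsupp.mem_support_iff.mp hd))
  rw [Function.update_of_ne this]

lemma my_pderiv_pderiv {p : MvPolynomial σ ℂ} {j : σ} (h : pderiv j p = 0) (i : σ) :
    pderiv j (pderiv i p) = 0 := by
  ext m
  rw [my_coeff_pderiv, my_coeff_pderiv, coeff_zero]
  rw [my_coeff_eq_zero h, mul_zero, mul_zero]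
  simp [Finsupp.add_apply, Finsupp.single_eq_same]

lemma my_isHomog_pderiv {p : MvPolynomial σ ℂ} {m : ℕ} (h : p.IsHomogeneous (m + 1)) (i : σ) :
    (pderiv i p).IsHomogeneous m := by
  intro d hd
  rw [my_coeff_pderiv] at hd
  have h2 : coeff (d + Finsupp.single i 1) p ≠ 0 := right_ne_zero_of_mul hd
  have := h h2
  rw [map_add] at this
  have hs : (Finsupp.weight 1) (Finsupp.single i 1) = 1 := by
    simp [Finsupp.weight_apply, Finsupp.sum_single_index]
  omega

lemma my_homog_zero_eval {p : MvPolynomial σ ℂ} (h : p.IsHomogeneous 0) (y z : σ → ℂ) :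
    eval y p = eval z p := by
  have hp : p = C (coeff 0 p) := by
    ext d
    by_cases hd : d = 0
    · simp [hd]
    · rw [h.coeff_eq_zero, coeff_C, if_neg (Ne.symm hd)]
      rwa [Ne, Finsupp.degree_eq_zero_iff]
  rw [hp]
  simp

lemma my_eval_vanish {p : MvPolynomial σ ℂ} {m : ℕ} (h : p.IsHomogeneous m) (hm : m ≠ 0)
    {j : σ} (hj : pderiv j p = 0) {y : σ → ℂ} (hy : ∀ i, i ≠ j → y i = 0) :
    eval y p = 0 := by
  rw [eval_eq]
  refine Finset.sum_eq_zero fun d hd => ?_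
  have hd' := Finsupp.mem_support_iff.mp hd
  have hdj : d j = 0 := by
    by_contra hc; exact hd' (my_coeff_eq_zero hj hc)
  have hne : d ≠ 0 := by
    rintro rfl
    exact hm ((h hd').symm.trans (by simp [Finsupp.weight_apply]))
  obtain ⟨i, hi⟩ := Finsupp.support_nonempty_iff.mpr hne
  have hij : i ≠ j := by
    rintro rfl; exact Finsupp.mem_support_iff.mp hi hdj
  rw [Finset.prod_eq_zero hi, mul_zero]
  rw [hy i hij]
  exact zero_pow (Finsupp.mem_support_iff.mp hi)

/-- Conversely, if the cubic hypersurface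
`Y = V(f + l·y_{n+1}^2) ⊂ P^{n+1}` is smooth, then `X = V(f) ⊂ P^n` is smooth and the
hyperplane `H = V(l)` intersects `X` transversely. -/
theorem X_smooth_and_transverse_of_Y_smooth (n : ℕ)
    (f l : MvPolynomial (Fin (n + 2)) ℂ)
    (hf3 : f.IsHomogeneous 3) (hl1 : l.IsHomogeneous 1)
    (hfvar : pderiv (Fin.last (n + 1)) f = 0)
    (hlvar : pderiv (Fin.last (n + 1)) l = 0)
    -- `Y` is smooth
    (hYsm : ∀ y : Fin (n + 2) → ℂ, y ≠ 0 →
      ¬ (eval y (f + l * (X (Fin.last (n + 1))) ^ 2) = 0 ∧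
        ∀ i, eval y (pderiv i (f + l * (X (Fin.last (n + 1))) ^ 2)) = 0)) :
    -- `X` is smooth …
    (∀ y : Fin (n + 2) → ℂ, y ≠ 0 → y (Fin.last (n + 1)) = 0 →
      eval y f = 0 → (∀ i, eval y (pderiv i f) = 0) → False) ∧
    -- … and `H` intersects `X` transversely
    (∀ y : Fin (n + 2) → ℂ, y ≠ 0 → y (Fin.last (n + 1)) = 0 →
      eval y f = 0 → eval y l = 0 →
      LinearIndependent ℂ
        ![fun i => eval y (pderiv i f), fun i => eval y (pderiv i l)]) := by
  have part1 : ∀ y : Fin (n + 2) → ℂ, y ≠ 0 → y (Fin.last (n + 1)) = 0 →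
      eval y f = 0 → (∀ i, eval y (pderiv i f) = 0) → False := by
    intro y hy h0 hyf hdf
    refine hYsm y hy ⟨?_, fun i => ?_⟩
    · simp [hyf, h0]
    · simp [pderiv_mul, pderiv_pow, map_add, map_mul, eval_X, h0, hdf i]
  refine ⟨part1, ?_⟩
  intro y hy h0 hyf hyl
  rw [LinearIndependent.pair_iff]
  intro a b hab
  have hab' : ∀ i, a * eval y (pderiv i f) + b * eval y (pderiv i l) = 0 := by
    intro i
    have := congrFun hab i
    simpa using this
  have hb : b = 0 := by
    by_contra hb
    set c : ℂ := -a / b with hc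
    have hDl : ∀ i, eval y (pderiv i l) = c * eval y (pderiv i f) := by
      intro i
      have h := hab' i
      rw [hc]
      field_simp
      linear_combination h
    by_cases hcz : c = 0
    · set e : Fin (n + 2) → ℂ := Function.update (0 : Fin (n + 2) → ℂ) (Fin.last (n + 1)) 1
        with he
      have heL : e (Fin.last (n + 1)) = 1 := by simp [he]
      have hene : e ≠ 0 := fun h => by simp [h] at heL
      have hey : ∀ i, i ≠ Fin.last (n + 1) → e i = 0 := fun i hi => by
        simp [he, Function.update_of_ne hi]
      have h2 : eval e l = 0 := my_eval_vanish hl1 one_ne_zero hlvar hey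
      refine hYsm e hene ⟨?_, fun i => ?_⟩
      · have h1 : eval e f = 0 := my_eval_vanish hf3 (by norm_num) hfvar hey
        simp [h1, h2]
      · have h1 : eval e (pderiv i f) = 0 := by
          by_cases hi : i = Fin.last (n + 1)
          · subst hi; simp [hfvar]
          · exact my_eval_vanish (my_isHomog_pderiv hf3 i) (by norm_num)
              (my_pderiv_pderiv hfvar i) hey
        have h3 : eval e (pderiv i l) = 0 := by
          by_cases hi : i = Fin.last (n + 1)
          · subst hi; simp [hlvar]
          · have hh : (pderiv i l).IsHomogeneous 0 := my_isHomog_pderiv hl1 i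
            rw [my_homog_zero_eval hh e y, hDl i, hcz, zero_mul]
        simp [pderiv_mul, pderiv_pow, map_add, map_mul, h1, h2, h3]
    · obtain ⟨t, ht⟩ := IsAlgClosed.exists_pow_nat_eq (k := ℂ) (-1 / c) zero_lt_two
      have htne : t ≠ 0 := by
        intro h
        rw [h] at ht
        simp only [ne_eq, zero_pow, OfNat.ofNat_ne_zero, not_false_eq_true] at ht
        have : (-1 : ℂ) / c ≠ 0 := by
          simp [div_eq_zero_iff, hcz]
        exact this ht.symm
      set y' := Function.update y (Fin.last (n + 1)) t with hy'
      have hy'L : y' (Fin.last (n + 1)) = t := by simp [hy']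
      have hy'ne : y' ≠ 0 := fun h => htne (by simp [h] at hy'L; exact hy'L.symm)
      refine hYsm y' hy'ne ⟨?_, fun i => ?_⟩
      · simp [my_eval_update hfvar y t, my_eval_update hlvar y t, hyf, hyl, hy']
      · have e1 : eval y' (pderiv i f) = eval y (pderiv i f) :=
          my_eval_update (my_pderiv_pderiv hfvar i) y t
        have e2 : eval y' (pderiv i l) = eval y (pderiv i l) :=
          my_eval_update (my_pderiv_pderiv hlvar i) y t
        have e3 : eval y' l = 0 := (my_eval_update hlvar y t).trans hyl
        have hct : c * t ^ 2 = -1 := by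
          rw [ht]
          field_simp
        simp only [map_add, pderiv_mul, pderiv_pow, map_mul, map_pow, eval_X, e1, e2, e3,
          hDl i, hy'L, zero_mul, mul_zero, add_zero]
        linear_combination eval y (pderiv i f) * hct
  refine ⟨?_, hb⟩
  by_contra ha
  apply part1 y hy h0 hyf
  intro i
  have h := hab' i
  rw [hb, zero_mul, add_zero] at h
  exact (mul_eq_zero.mp h).resolve_left ha
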